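/- arXiv:1607.06241 — 4 statements merged into one kernel-verified Lean document; each statement's English description precedes it below -/
import Mathlib

section
/- Let F be a field of characteristic p > 0 and G a finite p-group. Then the Jacobson radical of the group algebra FG equals the augmentation ideal of FG (the kernel of the augmentation map FG → F sending each group element to 1). -/
set_option maxHeartbeats 1000000
set_option synthInstance.maxHeartbeats 1000000

open MonoidAlgebra

section Aux

variable (F : Type*) [Field F] (p : ℕ) [Fact p.Prime] [CharP F p]
    (G : Type*) [Group G] [Finite G]

theorem aug_apply (x : MonoidAlgebra F G) :
    (MonoidAlgebra.lift F F G) (1 : G →* F) x = x.coeff.sum fun _ c => c := by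
  rw [MonoidAlgebra.lift_apply]
  simp

/-- If `x` is fixed by every group element, then the action of `r` on `x` is through the
augmentation of `r`. -/
theorem fixed_smul {M : Type*} [AddCommGroup M] [Module (MonoidAlgebra F G) M]
    {x : M} (hx : ∀ g : G, MonoidAlgebra.of F G g • x = x) (r : MonoidAlgebra F G) :
    r • x = algebraMap F (MonoidAlgebra F G) ((MonoidAlgebra.lift F F G) (1 : G →* F) r) • x := by
  induction r using MonoidAlgebra.induction_on with
  | of g => rw [MonoidAlgebra.lift_of, MonoidHom.one_apply, map_one, one_smul, hx g]
  | add a b ha hb => rw [add_smul, ha, hb, map_add, map_add, add_smul]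
  | smul c r hr =>
      rw [map_smul, smul_eq_mul, map_mul, Algebra.smul_def, mul_smul, hr, mul_smul]

theorem key (hG : IsPGroup p G) (m : Ideal (MonoidAlgebra F G)) (hm : m.IsMaximal) :
    RingHom.ker ((MonoidAlgebra.lift F F G) (1 : G →* F)) ≤ m := by
  classical
  suffices h : ∀ g : G, MonoidAlgebra.of F G g - 1 ∈ m by
    intro x hx
    have hx0 : (MonoidAlgebra.lift F F G) (1 : G →* F) x = 0 := hx
    rw [aug_apply, Finsupp.sum] at hx0
    have hxeq : x = ∑ g ∈ x.coeff.support,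
        algebraMap F (MonoidAlgebra F G) (x.coeff g) * (MonoidAlgebra.of F G g - 1) := by
      have h1 : ∑ g ∈ x.coeff.support, algebraMap F (MonoidAlgebra F G) (x.coeff g) *
          (MonoidAlgebra.of F G g - 1)
          = (∑ g ∈ x.coeff.support, algebraMap F (MonoidAlgebra F G) (x.coeff g) * MonoidAlgebra.of F G g)
            - ∑ g ∈ x.coeff.support, algebraMap F (MonoidAlgebra F G) (x.coeff g) := by
        rw [← Finset.sum_sub_distrib]
        simp [mul_sub]
      rw [h1]
      have h2 : ∀ g ∈ x.coeff.support, algebraMap F (MonoidAlgebra F G) (x.coeff g) * MonoidAlgebra.of F G g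
          = MonoidAlgebra.single g (x.coeff g) := by
        intro g _
        rw [← Algebra.smul_def]
        simp [MonoidAlgebra.of_apply, Finsupp.smul_single]
      rw [Finset.sum_congr rfl h2]
      have h3 : ∑ g ∈ x.coeff.support, algebraMap F (MonoidAlgebra F G) (x.coeff g)
          = algebraMap F (MonoidAlgebra F G) (∑ g ∈ x.coeff.support, x.coeff g) := by
        rw [map_sum]
      rw [h3, hx0, map_zero, sub_zero]
      exact (MonoidAlgebra.sum_coeff_single x).symm
    rw [hxeq]
    exact Submodule.sum_mem m fun g _ => Ideal.mul_mem_left m _ (h g)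
  intro g
  -- the quotient module
  haveI hsimple : IsSimpleModule (MonoidAlgebra F G) (MonoidAlgebra F G ⧸ m) :=
    isSimpleModule_iff_isCoatom.mpr hm.out
  -- the fixed-point submodule
  set N : Submodule (MonoidAlgebra F G) (MonoidAlgebra F G ⧸ m) :=
    { carrier := {x | ∀ g : G, MonoidAlgebra.of F G g • x = x}
      add_mem' := fun ha hb g => by rw [smul_add, ha g, hb g]
      zero_mem' := fun g => smul_zero _
      smul_mem' := by
        intro r x hx g
        rw [fixed_smul F G hx r, ← mul_smul, ← Algebra.commutes, mul_smul, hx g] } with hN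
  -- `M` is a `ZMod p`-module
  have hchar : ∀ x : MonoidAlgebra F G ⧸ m, p • x = 0 := by
    intro x
    rw [← Nat.cast_smul_eq_nsmul (MonoidAlgebra F G)]
    rw [show ((p : MonoidAlgebra F G)) = 0 by
      rw [← map_natCast (algebraMap F (MonoidAlgebra F G)) p, CharP.cast_eq_zero F p, map_zero]]
    exact zero_smul _ x
  haveI : Module (ZMod p) (MonoidAlgebra F G ⧸ m) := AddCommGroup.zmodModule hchar
  set v : MonoidAlgebra F G ⧸ m := Submodule.Quotient.mk 1 with hv
  have hv0 : v ≠ 0 := by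
    rw [hv, Ne, Submodule.Quotient.mk_eq_zero]
    exact fun h => hm.ne_top ((Ideal.eq_top_iff_one m).mpr h)
  set s : Set (MonoidAlgebra F G ⧸ m) :=
    Set.range fun g : G => MonoidAlgebra.of F G g • v with hs
  set W : Submodule (ZMod p) (MonoidAlgebra F G ⧸ m) := Submodule.span (ZMod p) s with hW
  haveI : Module.Finite (ZMod p) W :=
    Module.Finite.span_of_finite (ZMod p) (show s.Finite from Set.finite_range _)
  haveI : Finite W := Module.finite_of_finite (ZMod p)
  -- the action of G preserves W
  have hmap : ∀ (g : G) (x : MonoidAlgebra F G ⧸ m), x ∈ W → MonoidAlgebra.of F G g • x ∈ W := by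
    intro g x hx
    induction hx using Submodule.span_induction with
    | mem y hy =>
        obtain ⟨h, rfl⟩ := hy
        rw [← mul_smul, ← map_mul]
        exact Submodule.subset_span ⟨g * h, rfl⟩
    | zero => rw [smul_zero]; exact W.zero_mem
    | add a b _ _ ha hb => rw [smul_add]; exact W.add_mem ha hb
    | smul c y _ hy =>
        have hcom : MonoidAlgebra.of F G g • (c • y)
            = c • (MonoidAlgebra.of F G g • y) :=
          ZMod.map_smul (DistribMulAction.toAddMonoidHom _ (MonoidAlgebra.of F G g)) c y
        rw [hcom]
        exact W.smul_mem c hy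
  letI : MulAction G W :=
    { smul := fun g w => ⟨MonoidAlgebra.of F G g • (w : MonoidAlgebra F G ⧸ m), hmap g w w.2⟩
      one_smul := fun w => Subtype.ext (by
        show MonoidAlgebra.of F G 1 • (w : MonoidAlgebra F G ⧸ m) = w
        rw [map_one, one_smul])
      mul_smul := fun g h w => Subtype.ext (by
        show MonoidAlgebra.of F G (g * h) • (w : MonoidAlgebra F G ⧸ m)
          = MonoidAlgebra.of F G g • (MonoidAlgebra.of F G h • (w : MonoidAlgebra F G ⧸ m))
        rw [map_mul, mul_smul]) }
  have hvW : v ∈ W := Submodule.subset_span ⟨1, by simp [← MonoidAlgebra.one_def]⟩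
  haveI : Nontrivial W := nontrivial_of_ne ⟨v, hvW⟩ 0 (fun h => hv0 (Subtype.ext_iff.mp h))
  -- cardinality of W is a positive power of p
  letI := Fintype.ofFinite W
  have hcardW : p ∣ Nat.card W := by
    rw [Nat.card_eq_fintype_card, Module.card_eq_pow_finrank (K := ZMod p) (V := W), ZMod.card]
    exact dvd_pow_self p Module.finrank_pos.ne'
  have hmod := hG.card_modEq_card_fixedPoints W
  have hdvd : p ∣ Nat.card (MulAction.fixedPoints G W) :=
    (Nat.modEq_zero_iff_dvd.mp (hmod.symm.trans (Nat.modEq_zero_iff_dvd.mpr hcardW)))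
  -- there is a nonzero fixed point
  have hzero_fixed : (0 : W) ∈ MulAction.fixedPoints G W := fun g =>
    Subtype.ext (smul_zero _)
  have hex : ∃ w : W, w ∈ MulAction.fixedPoints G W ∧ w ≠ 0 := by
    by_contra hcon
    push_neg at hcon
    have h1 : MulAction.fixedPoints G W = {0} := by
      ext w
      constructor
      · intro hw; exact hcon w hw
      · rintro rfl; exact hzero_fixed
    rw [h1] at hdvd
    haveI : Unique ({0} : Set W) := Set.uniqueSingleton 0
    rw [Nat.card_unique] at hdvd
    have h2 := (Fact.out : p.Prime).two_le
    have h3 := Nat.le_of_dvd one_pos hdvd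
    omega
  obtain ⟨w, hw, hw0⟩ := hex
  -- conclude N = ⊤
  have hwN : (w : MonoidAlgebra F G ⧸ m) ∈ N := by
    intro g'
    exact Subtype.ext_iff.mp (hw g')
  have hNne : N ≠ ⊥ := by
    intro hbot
    apply hw0
    apply Subtype.ext
    have := hbot ▸ hwN
    exact (Submodule.mem_bot _).mp this
  have hNtop : N = ⊤ := (eq_bot_or_eq_top N).resolve_left hNne
  -- apply to mk 1
  have hfix : ∀ x : MonoidAlgebra F G ⧸ m, MonoidAlgebra.of F G g • x = x := by
    intro x
    have : x ∈ N := hNtop ▸ Submodule.mem_top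
    exact this g
  have h1 := hfix (Submodule.Quotient.mk 1)
  rw [← Submodule.Quotient.mk_smul, smul_eq_mul, mul_one] at h1
  exact (Submodule.Quotient.eq m).mp h1

end Aux

/-- For a field `F` of characteristic `p > 0` and a finite `p`-group `G`, the Jacobson radical of
the group algebra `FG` equals the augmentation ideal, i.e. the kernel of the augmentation map
`FG → F` sending each group element to `1`. -/
theorem jacobson_eq_augmentation_ideal (F : Type*) [Field F] (p : ℕ) [Fact p.Prime] [CharP F p]
    (G : Type*) [Group G] [Finite G] (hG : IsPGroup p G) :
    Ideal.jacobson (⊥ : Ideal (MonoidAlgebra F G)) =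
      RingHom.ker ((MonoidAlgebra.lift F F G) (1 : G →* F)) := by
  apply le_antisymm
  · haveI : (RingHom.ker ((MonoidAlgebra.lift F F G) (1 : G →* F))).IsMaximal :=
      RingHom.ker_isMaximal_of_surjective _
        (fun c => ⟨algebraMap F (MonoidAlgebra F G) c,
          ((MonoidAlgebra.lift F F G) (1 : G →* F)).commutes c⟩)
    exact sInf_le ⟨bot_le, this⟩
  · exact le_sInf fun J hJ => key F p G hG J hJ.2
end

section
/- Let F be an algebraically closed field of characteristic p > 0, P a finite abelian p-group, and I a p'-subgroup of Aut(P) with C_P(I) = 1. Then the Jacobson radical of the fixed-point algebra FP^I = {x ∈ FP : x^γ = x for all γ ∈ I} is contained in the square of the Jacobson radical of FP, i.e. J(FP^I) ⊆ (J(FP))^2. -/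
set_option synthInstance.maxHeartbeats 1000000
set_option maxHeartbeats 1000000

/-- The Jacobson radical of an `F`-algebra `A`, viewed as an `F`-submodule. -/
noncomputable def jacRad (F A : Type*) [CommSemiring F] [Ring A] [Algebra F A] : Submodule F A :=
  Submodule.restrictScalars F (Ideal.jacobson (⊥ : Ideal A))

open MonoidAlgebra in
/-- the F-span of the elements `g - 1`. -/
noncomputable def augK (F : Type*) [Field F] (P : Type*) [CommGroup P] :
    Submodule F (MonoidAlgebra F P) :=
  Submodule.span F (Set.range fun g : P => (MonoidAlgebra.of F P g : MonoidAlgebra F P) - 1)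

open MonoidAlgebra in
lemma mul_sub_one_identity {F : Type*} [Field F] {P : Type*} [CommGroup P] (a b : P) :
    (of F P (a * b) : MonoidAlgebra F P) - 1 =
      ((of F P a : MonoidAlgebra F P) - 1) + ((of F P b : MonoidAlgebra F P) - 1)
        + ((of F P a : MonoidAlgebra F P) - 1) * ((of F P b : MonoidAlgebra F P) - 1) := by
  rw [map_mul]; ring

open MonoidAlgebra in
lemma sum_sub_prod_mem {F : Type*} [Field F] {P : Type*} [CommGroup P]
    {ι : Type*} (f : ι → P) (s : Finset ι) :
    (∑ γ ∈ s, ((of F P (f γ) : MonoidAlgebra F P) - 1))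
      - ((of F P (∏ γ ∈ s, f γ) : MonoidAlgebra F P) - 1) ∈ augK F P * augK F P := by
  classical
  induction s using Finset.induction with
  | empty => simp [← MonoidAlgebra.one_def]
  | @insert a s ha ih =>
      rw [Finset.sum_insert ha, Finset.prod_insert ha, mul_sub_one_identity]
      have h2 : ((of F P (f a) : MonoidAlgebra F P) - 1) *
          ((of F P (∏ γ ∈ s, f γ) : MonoidAlgebra F P) - 1) ∈ augK F P * augK F P :=
        Submodule.mul_mem_mul (Submodule.subset_span ⟨_, rfl⟩) (Submodule.subset_span ⟨_, rfl⟩)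
      have := sub_mem ih h2
      convert this using 1
      ring

open MonoidAlgebra in
lemma augK_le_jacRad {F : Type*} [Field F] (p : ℕ) [Fact p.Prime] [CharP F p]
    {P : Type*} [CommGroup P] (hP : IsPGroup p P) :
    augK F P ≤ jacRad F (MonoidAlgebra F P) := by
  haveI : CharP (MonoidAlgebra F P) p :=
    charP_of_injective_algebraMap (algebraMap F (MonoidAlgebra F P)).injective p
  haveI : ExpChar (MonoidAlgebra F P) p := .prime Fact.out
  rw [augK, Submodule.span_le]
  rintro _ ⟨g, rfl⟩
  show (of F P g : MonoidAlgebra F P) - 1 ∈ Ideal.jacobson ⊥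
  refine Ideal.radical_le_jacobson (mem_nilradical.mpr ?_)
  obtain ⟨k, hk⟩ := hP g
  exact ⟨p ^ k, by rw [sub_pow_char_pow, ← map_pow, hk, map_one, one_pow, sub_self]⟩

lemma norm_fixed_eq_one {P : Type*} [CommGroup P] (I : Subgroup (MulAut P)) [Fintype ↥I]
    (hC : ∀ x : P, (∀ γ ∈ I, γ x = x) → x = 1) (g : P) :
    ∏ γ : ↥I, (γ : MulAut P) g = 1 := by
  apply hC
  intro δ hδ
  rw [map_prod]
  have h1 : ∀ γ : ↥I, δ ((γ : MulAut P) g) = ((⟨δ, hδ⟩ * γ : ↥I) : MulAut P) g :=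
    fun γ => rfl
  simp only [h1]
  exact Equiv.prod_comp (Equiv.mulLeft (⟨δ, hδ⟩ : ↥I))
    (fun γ : ↥I => (γ : MulAut P) g)

/-- The fixed-point subalgebra `(FP)^I` of the group algebra `FP` under a subgroup
`I ≤ Aut P`, acting by `F`-linear extension of its action on `P`. -/
def fixedPointAlgebra (F : Type*) [CommSemiring F] {P : Type*} [Group P]
    (I : Subgroup (MulAut P)) : Subalgebra F (MonoidAlgebra F P) where
  carrier := {x | ∀ γ ∈ I, MonoidAlgebra.domCongr F F (γ : P ≃* P) x = x}
  mul_mem' := by intro x y hx hy γ hγ; simp only [Set.mem_setOf_eq, map_mul] at *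
                 rw [hx γ hγ, hy γ hγ]
  add_mem' := by intro x y hx hy γ hγ; simp only [Set.mem_setOf_eq, map_add] at *
                 rw [hx γ hγ, hy γ hγ]
  one_mem' := by intro γ hγ; simp
  zero_mem' := by intro γ hγ; simp
  algebraMap_mem' := by intro r γ hγ; simp [Algebra.algebraMap_eq_smul_one]

/-- If `F` is algebraically closed of characteristic `p > 0`, `P` is a finite abelian `p`-group,
and `I` is a `p'`-subgroup of `Aut P` with `C_P(I) = 1`, then the Jacobson radical of the
fixed-point algebra `(FP)^I` is contained in the square of the Jacobson radical of `FP`. -/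
theorem jacobson_fixedPointAlgebra_le_sq (F : Type*) [Field F] [IsAlgClosed F]
    (p : ℕ) [Fact p.Prime] [CharP F p]
    (P : Type*) [CommGroup P] [Fintype P] (hP : IsPGroup p P)
    (I : Subgroup (MulAut P)) (hI : Nat.Coprime (Nat.card I) p)
    (hC : ∀ x : P, (∀ γ ∈ I, γ x = x) → x = 1) :
    Submodule.map (fixedPointAlgebra F I).val.toLinearMap
        (jacRad F (fixedPointAlgebra F I)) ≤
      jacRad F (MonoidAlgebra F P) ^ 2 := by
  classical
  haveI : Finite (MulAut P) := by
    exact Finite.of_injective (fun e : MulAut P => (e : P → P))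
      (fun a b h => by ext x; exact congrFun h x)
  haveI : Fintype ↥I := Fintype.ofFinite ↥I
  set R := fixedPointAlgebra F I with hR
  set ε : MonoidAlgebra F P →ₐ[F] F := (MonoidAlgebra.lift F F P) 1 with hε
  set n : ℕ := Fintype.card ↥I with hn
  -- n ≠ 0 in F
  have hnF : (n : F) ≠ 0 := by
    intro h0
    have hdvd : p ∣ n := (CharP.cast_eq_zero_iff F p n).mp h0
    rw [hn, ← Nat.card_eq_fintype_card] at hdvd
    have h1 : p ∣ Nat.gcd (Nat.card ↥I) p := Nat.dvd_gcd hdvd dvd_rfl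
    rw [Nat.Coprime] at hI
    rw [hI] at h1
    exact (Fact.out : p.Prime).one_lt.ne' (Nat.dvd_one.mp h1)
  -- key lemma
  have key : ∀ z : MonoidAlgebra F P,
      (∑ γ : ↥I, MonoidAlgebra.domCongr F F ((γ : MulAut P) : P ≃* P) z)
        - ε z • ((n : F) • (1 : MonoidAlgebra F P)) ∈ augK F P * augK F P := by
    intro z
    induction z using MonoidAlgebra.induction_on with
    | of g =>
        have hsum := sum_sub_prod_mem (F := F) (fun γ : ↥I => (γ : MulAut P) g) Finset.univ
        rw [norm_fixed_eq_one I hC g] at hsum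
        simp only [map_one, sub_self, sub_zero] at hsum
        convert hsum using 1
        rw [Finset.sum_sub_distrib]
        congr 1
        · exact Finset.sum_congr rfl fun γ _ => by
            simp [MonoidAlgebra.of_apply, MonoidAlgebra.domCongr_single]
        · simp [hε, MonoidAlgebra.lift_of, Finset.sum_const, hn,
            ← Nat.cast_smul_eq_nsmul F]
    | add f g hf hg =>
        have := add_mem hf hg
        convert this using 1
        simp only [map_add, Finset.sum_add_distrib, add_smul]
        abel
    | smul r f hf =>
        have := Submodule.smul_mem (augK F P * augK F P) r hf
        convert this using 1
        rw [smul_sub, Finset.smul_sum]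
        congr 1
        · exact Finset.sum_congr rfl fun γ _ => by
            simp [map_smul]
        · rw [map_smul, smul_eq_mul, ← smul_smul]
  rintro _ ⟨y, hyJ, rfl⟩
  -- ε y = 0
  have hsurj : Function.Surjective ((ε.comp R.val : R →ₐ[F] F) : R →+* F) := by
    intro c
    exact ⟨algebraMap F R c, by simp⟩
  haveI hmax : (RingHom.ker ((ε.comp R.val : R →ₐ[F] F) : R →+* F)).IsMaximal :=
    RingHom.ker_isMaximal_of_surjective _ hsurj
  have hεy : ε (y : MonoidAlgebra F P) = 0 := by
    have hle : Ideal.jacobson (⊥ : Ideal R) ≤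
        RingHom.ker ((ε.comp R.val : R →ₐ[F] F) : R →+* F) :=
      sInf_le ⟨bot_le, hmax⟩
    have := hle hyJ
    simpa [RingHom.mem_ker] using this
  -- fixedness
  have hfix : ∀ γ : ↥I,
      MonoidAlgebra.domCongr F F ((γ : MulAut P) : P ≃* P) (y : MonoidAlgebra F P) = y :=
    fun γ => y.2 γ γ.2
  have hmem : (n : F) • (y : MonoidAlgebra F P) ∈ augK F P * augK F P := by
    have := key (y : MonoidAlgebra F P)
    rw [hεy, zero_smul, sub_zero] at this
    have hsum : (∑ γ : ↥I, MonoidAlgebra.domCongr F F ((γ : MulAut P) : P ≃* P)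
        (y : MonoidAlgebra F P)) = (n : F) • (y : MonoidAlgebra F P) := by
      rw [Finset.sum_congr rfl fun γ _ => hfix γ]
      simp [hn, ← Nat.cast_smul_eq_nsmul F]
    rwa [hsum] at this
  have hy : (y : MonoidAlgebra F P) ∈ augK F P * augK F P := by
    have := Submodule.smul_mem (augK F P * augK F P) (n : F)⁻¹ hmem
    rwa [smul_smul, inv_mul_cancel₀ hnF, one_smul] at this
  have hle2 : augK F P * augK F P ≤ jacRad F (MonoidAlgebra F P) ^ 2 := by
    rw [sq]
    exact mul_le_mul' (augK_le_jacRad p hP) (augK_le_jacRad p hP)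
  exact hle2 hy
end

section
/- Let F be an algebraically closed field of characteristic p > 0, P a finite abelian p-group, and I a p'-subgroup of Aut(P). Then LL(FP^I) ≤ LL(F C_P(I)) + (LL(F[P,I]) - 1)/2, where LL denotes the Loewy length and FP^I is the algebra of I-fixed points of FP. -/
set_option synthInstance.maxHeartbeats 1000000
set_option maxHeartbeats 1000000

/-- The Loewy length of an `F`-algebra `A`: the least `l > 0` with `(J A) ^ l = 0`. -/
noncomputable def LL (F A : Type*) [CommSemiring F] [Ring A] [Algebra F A] : ℕ :=
  sInf {l : ℕ | 0 < l ∧ jacRad F A ^ l = ⊥}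

/-- The subgroup of fixed points of a group of automorphisms `I ≤ Aut P`. -/
def fixedSubgroup {P : Type*} [Group P] (I : Subgroup (MulAut P)) : Subgroup P where
  carrier := {x | ∀ γ ∈ I, γ x = x}
  one_mem' := by intro γ _; simp
  mul_mem' := by intro x y hx hy γ hγ; simp [map_mul, hx γ hγ, hy γ hγ]
  inv_mem' := by intro x hx γ hγ; simp [map_inv, hx γ hγ]

/-- The subgroup `[P, I]` generated by the elements `x⁻¹ · γ x` for `x ∈ P`, `γ ∈ I`. -/
def commSubgroup {P : Type*} [Group P] (I : Subgroup (MulAut P)) : Subgroup P :=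
  Subgroup.closure {y | ∃ x : P, ∃ γ ∈ I, y = x⁻¹ * γ x}

/-! ### Auxiliary lemmas -/

lemma restrictScalars_ideal_pow {F A : Type*} [CommSemiring F] [CommRing A] [Algebra F A]
    (J : Ideal A) : ∀ n : ℕ, 0 < n →
    (Submodule.restrictScalars F (J ^ n) : Submodule F A) = (Submodule.restrictScalars F J) ^ n := by
  intro n hn
  induction n with
  | zero => omega
  | succ m ih =>
    rcases Nat.eq_zero_or_pos m with hm | hm
    · subst hm; simp [pow_one]
    · rw [pow_succ, pow_succ, ← ih hm, Submodule.restrictScalars_mul]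

lemma exists_pow_jacRad_eq_bot (F A : Type*) [Field F] [CommRing A] [Algebra F A]
    [FiniteDimensional F A] : ∃ l, 0 < l ∧ jacRad F A ^ l = ⊥ := by
  haveI : IsArtinian A A := isArtinian_of_tower F inferInstance
  obtain ⟨n, hn⟩ := IsArtinianRing.isNilpotent_jacobson_bot (R := A)
  refine ⟨n + 1, Nat.succ_pos _, ?_⟩
  have h1 : (Ideal.jacobson (⊥ : Ideal A)) ^ (n + 1) = ⊥ := by
    rw [pow_succ, hn, zero_mul]; rfl
  rw [jacRad, ← restrictScalars_ideal_pow _ _ (Nat.succ_pos _), h1]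
  rfl

lemma nilpotent_mem_jacRad {F A : Type*} [CommSemiring F] [CommRing A] [Algebra F A]
    {x : A} (hx : IsNilpotent x) : x ∈ jacRad F A :=
  Ideal.radical_le_jacobson (mem_nilradical.2 hx)

lemma submodule_pow_mono {F A : Type*} [CommSemiring F] [CommSemiring A] [Algebra F A]
    {M N : Submodule F A} (h : M ≤ N) : ∀ n : ℕ, M ^ n ≤ N ^ n := by
  intro n
  induction n with
  | zero => simp
  | succ m ih => rw [pow_succ, pow_succ]; exact mul_le_mul' ih h

lemma sup_pow_eq_bot {F A : Type*} [CommSemiring F] [CommSemiring A] [Algebra F A]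
    {X Y : Submodule F A} {a b n : ℕ} (ha : X ^ a = ⊥) (hb : Y ^ b = ⊥)
    (hn : a + b ≤ n + 1) : (X ⊔ Y) ^ n = ⊥ := by
  have hXY : (X ⊔ Y : Submodule F A) = X + Y := rfl
  rw [hXY, add_pow, show (⊥ : Submodule F A) = 0 from rfl]
  apply Finset.sum_eq_zero
  intro k hk
  rcases le_or_gt a k with h | h
  · have hX0 : X ^ k = ⊥ := by
      have he : X ^ k = X ^ a * X ^ (k - a) := by rw [← pow_add]; congr 1; omega
      rw [he, ha, Submodule.bot_mul]
    rw [hX0, Submodule.bot_mul, Submodule.bot_mul]; rfl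
  · have hbk : b ≤ n - k := by
      simp only [Finset.mem_range] at hk; omega
    have hY0 : Y ^ (n - k) = ⊥ := by
      have he : Y ^ (n - k) = Y ^ b * Y ^ (n - k - b) := by rw [← pow_add]; congr 1; omega
      rw [he, hb, Submodule.bot_mul]
    rw [hY0, Submodule.mul_bot, Submodule.bot_mul]; rfl

section GroupPart

variable {P : Type*} [CommGroup P] (I : Subgroup (MulAut P)) [Fintype ↥I]

/-- The norm homomorphism `x ↦ ∏_{γ ∈ I} γ x`. -/
noncomputable def normMap : P →* P where
  toFun x := ∏ γ : ↥I, (γ : MulAut P) x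
  map_one' := by simp
  map_mul' x y := by simp [map_mul, Finset.prod_mul_distrib]

lemma normMap_apply (x : P) : normMap I x = ∏ γ : ↥I, (γ : MulAut P) x := rfl

lemma normMap_mem_fixed (x : P) : normMap I x ∈ fixedSubgroup I := by
  intro δ hδ
  rw [normMap_apply, map_prod]
  exact Fintype.prod_bijective (fun γ : ↥I => (⟨δ, hδ⟩ : ↥I) * γ)
    (Group.mulLeft_bijective _) _ _ (fun γ => rfl)

lemma normMap_aut (δ : MulAut P) (hδ : δ ∈ I) (x : P) : normMap I (δ x) = normMap I x := by
  rw [normMap_apply, normMap_apply]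
  exact Fintype.prod_bijective (fun γ : ↥I => γ * (⟨δ, hδ⟩ : ↥I))
    (Group.mulRight_bijective _) _ _ (fun γ => rfl)

lemma commSubgroup_le_ker : commSubgroup I ≤ (normMap I).ker := by
  rw [commSubgroup, Subgroup.closure_le]
  rintro y ⟨x, γ, hγ, rfl⟩
  simp only [SetLike.mem_coe, MonoidHom.mem_ker, map_mul, map_inv, normMap_aut I γ hγ]
  exact inv_mul_cancel _

lemma normMap_eq_one_of_mem {q : P} (hq : q ∈ commSubgroup I) : normMap I q = 1 :=
  commSubgroup_le_ker I hq

omit [Fintype ↥I] in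
lemma commSubgroup_invariant {γ : MulAut P} (hγ : γ ∈ I) {q : P} (hq : q ∈ commSubgroup I) :
    γ q ∈ commSubgroup I := by
  have key : commSubgroup I ≤ Subgroup.comap γ.toMonoidHom (commSubgroup I) := by
    rw [commSubgroup, Subgroup.closure_le]
    rintro y ⟨x, δ, hδ, rfl⟩
    simp only [SetLike.mem_coe, Subgroup.mem_comap]
    refine Subgroup.subset_closure ⟨γ x, γ * δ * γ⁻¹, mul_mem (mul_mem hγ hδ) (inv_mem hγ), ?_⟩
    simp [MulAut.mul_apply, MulAut.inv_def, map_mul]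
  exact key hq

lemma exists_decomp (p : ℕ) [Fact p.Prime] [Fintype P] (hP : IsPGroup p P)
    (hI : Nat.Coprime (Nat.card ↥I) p) (x : P) :
    ∃ c ∈ fixedSubgroup I, ∃ q ∈ commSubgroup I, x = c * q := by
  obtain ⟨k, hk⟩ := (IsPGroup.iff_card (p := p) (G := P)).1 hP
  have hco : (Nat.card P).Coprime (Nat.card ↥I) := by
    rw [hk]
    exact (hI.symm.pow_left k)
  set n := Nat.card ↥I with hn
  obtain ⟨y, hy⟩ := (powCoprime hco).surjective x
  have hyx : y ^ n = x := hy
  refine ⟨normMap I y, normMap_mem_fixed I y, (normMap I y)⁻¹ * x, ?_, by group⟩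
  have hprod : (normMap I y)⁻¹ * x = ∏ γ : ↥I, ((γ : MulAut P) y)⁻¹ * y := by
    rw [← hyx, normMap_apply, Finset.prod_mul_distrib, ← Finset.prod_inv_distrib,
      Finset.prod_const, Finset.card_univ, ← Nat.card_eq_fintype_card]
  rw [hprod]
  refine Subgroup.prod_mem _ (fun γ _ => ?_)
  have h2 : ((γ : MulAut P) y)⁻¹ * y = (y⁻¹ * (γ : MulAut P) y)⁻¹ := by group
  rw [h2]
  exact inv_mem (Subgroup.subset_closure ⟨y, γ, γ.2, rfl⟩)

end GroupPart

section AugSub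

variable (F : Type*) [Field F] {P : Type*} [CommGroup P] (H : Subgroup P)

/-- The `F`-span of the elements `h - 1`, `h ∈ H`, inside `MonoidAlgebra F P`. -/
noncomputable def augSub : Submodule F (MonoidAlgebra F P) :=
  Submodule.span F {x | ∃ h ∈ H, x = MonoidAlgebra.single h (1:F) - 1}

lemma gen_mem_augSub {h : P} (hh : h ∈ H) : MonoidAlgebra.single h (1:F) - 1 ∈ augSub F H :=
  Submodule.subset_span ⟨h, hh, rfl⟩

lemma algebraMap_monoidAlgebra_injective (G : Type*) [Monoid G] :
    Function.Injective (algebraMap F (MonoidAlgebra F G)) := by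
  intro a b hab
  have := congrArg (fun x : MonoidAlgebra F G => x.coeff 1) hab
  simpa [MonoidAlgebra.coe_algebraMap] using this

lemma single_sub_one_mem_jacRad (p : ℕ) [Fact p.Prime] [CharP F p] {G : Type*} [CommGroup G]
    (g : G) (hg : ∃ k : ℕ, g ^ p ^ k = 1) :
    MonoidAlgebra.single g (1:F) - 1 ∈ jacRad F (MonoidAlgebra F G) := by
  obtain ⟨k, hk⟩ := hg
  haveI : CharP (MonoidAlgebra F G) p :=
    charP_of_injective_algebraMap (algebraMap_monoidAlgebra_injective F G) p
  apply nilpotent_mem_jacRad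
  refine ⟨p ^ k, ?_⟩
  rw [sub_pow_char_pow, MonoidAlgebra.single_pow, one_pow, hk, one_pow,
    MonoidAlgebra.one_def, sub_self]

lemma augSub_LL (p : ℕ) [Fact p.Prime] [CharP F p] [Fintype P] (hP : IsPGroup p P) :
    0 < LL F (MonoidAlgebra F ↥H) ∧ augSub F H ^ LL F (MonoidAlgebra F ↥H) = ⊥ := by
  haveI : Fintype ↥H := Fintype.ofFinite _
  haveI : Module.Finite F (MonoidAlgebra F ↥H) := Module.Finite.equiv (MonoidAlgebra.coeffLinearEquiv (S := F) (M := ↥H) F).symm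
  obtain ⟨hpos, hbot⟩ : 0 < LL F (MonoidAlgebra F ↥H) ∧
      jacRad F (MonoidAlgebra F ↥H) ^ LL F (MonoidAlgebra F ↥H) = ⊥ :=
    Nat.sInf_mem (exists_pow_jacRad_eq_bot F (MonoidAlgebra F ↥H))
  refine ⟨hpos, ?_⟩
  set φ := MonoidAlgebra.mapDomainAlgHom F F H.subtype with hφ
  have hle : augSub F H ≤ Submodule.map φ.toLinearMap (jacRad F (MonoidAlgebra F ↥H)) := by
    rw [augSub, Submodule.span_le]
    rintro x ⟨h, hh, rfl⟩
    refine ⟨MonoidAlgebra.single (⟨h, hh⟩ : ↥H) (1:F) - 1, ?_, ?_⟩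
    · refine single_sub_one_mem_jacRad F p _ ?_
      obtain ⟨k, hk⟩ := IsPGroup.to_subgroup hP H ⟨h, hh⟩
      exact ⟨k, hk⟩
    · simp only [map_sub, map_one, AlgHom.toLinearMap_apply]
      congr 1
      simp [hφ, MonoidAlgebra.mapDomainAlgHom, MonoidAlgebra.mapDomainRingHom,
        Finsupp.mapDomain_single]
  have := submodule_pow_mono hle (LL F (MonoidAlgebra F ↥H))
  rw [← Submodule.map_pow, hbot, Submodule.map_bot] at this
  exact le_bot_iff.1 this

end AugSub

/-- Let `F` be algebraically closed of characteristic `p > 0`, `P` a finite abelian `p`-group and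
`I` a `p'`-subgroup of `Aut P`. Then
`LL((FP)^I) ≤ LL(F C_P(I)) + (LL(F[P,I]) - 1)/2`. -/
theorem loewyLength_fixedPointAlgebra_le (F : Type*) [Field F] [IsAlgClosed F]
    (p : ℕ) [Fact p.Prime] [CharP F p]
    (P : Type*) [CommGroup P] [Fintype P] (hP : IsPGroup p P)
    (I : Subgroup (MulAut P)) (hI : Nat.Coprime (Nat.card I) p) :
    LL F (fixedPointAlgebra F I) ≤
      LL F (MonoidAlgebra F (fixedSubgroup I)) +
        (LL F (MonoidAlgebra F (commSubgroup I)) - 1) / 2 := by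
  classical
  haveI : Finite (MulAut P) :=
    Finite.of_injective (fun e : MulAut P => (e : P → P)) DFunLike.coe_injective
  haveI : Fintype ↥I := Fintype.ofFinite _
  set A := fixedPointAlgebra F I with hA
  set C := fixedSubgroup I with hCdef
  set Q := commSubgroup I with hQdef
  set lC := LL F (MonoidAlgebra F ↥C) with hlC
  set lQ := LL F (MonoidAlgebra F ↥Q) with hlQ
  obtain ⟨hCpos, hCbot⟩ := augSub_LL F C p hP
  obtain ⟨hQpos, hQbot⟩ := augSub_LL F Q p hP
  set JC := augSub F C with hJC
  set JQ := augSub F Q with hJQ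
  set X : Submodule F (MonoidAlgebra F P) := JC * ⊤ with hX
  set Y : Submodule F (MonoidAlgebra F P) := JQ * JQ with hY
  set n := Nat.card ↥I with hn
  set m := (lQ + 1) / 2 with hm
  set t := lC + m - 1 with ht
  -- basic numerics
  have hnpos : 0 < n := Nat.card_pos
  have hnF : (n : F) ≠ 0 := by
    intro h0
    have hdvd : p ∣ n := (CharP.cast_eq_zero_iff F p n).1 h0
    have h1 : p ∣ Nat.gcd n p := Nat.dvd_gcd hdvd dvd_rfl
    rw [Nat.Coprime.gcd_eq_one hI] at h1
    exact Nat.Prime.ne_one Fact.out (Nat.dvd_one.mp h1)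
  -- X ^ lC = ⊥
  have hXbot : X ^ lC = ⊥ := by
    rw [hX, mul_pow, hCbot]
    exact zero_mul _
  -- Y ^ m = ⊥
  have hYbot : Y ^ m = ⊥ := by
    have h2m : lQ ≤ m + m := by omega
    rw [hY, ← pow_two, ← pow_mul]
    have : JQ ^ (2 * m) = JQ ^ lQ * JQ ^ (2 * m - lQ) := by
      rw [← pow_add]
      congr 1
      omega
    rw [this, hQbot]
    exact zero_mul _
  -- the product lemma
  have prodL : ∀ (s : Finset ↥I) (f : ↥I → P), (∀ γ, f γ ∈ Q) →
      (MonoidAlgebra.single (∏ γ ∈ s, f γ) (1:F) - 1)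
        - ∑ γ ∈ s, (MonoidAlgebra.single (f γ) (1:F) - 1) ∈ Y := by
    intro s f hf
    induction s using Finset.induction_on with
    | empty => simp [← MonoidAlgebra.one_def]
    | insert a s' ha ih =>
      rw [Finset.prod_insert ha, Finset.sum_insert ha]
      have hs : MonoidAlgebra.single (f a * ∏ γ ∈ s', f γ) (1:F)
          = MonoidAlgebra.single (f a) (1:F) * MonoidAlgebra.single (∏ γ ∈ s', f γ) (1:F) := by
        rw [MonoidAlgebra.single_mul_single, one_mul]
      have key : (MonoidAlgebra.single (f a * ∏ γ ∈ s', f γ) (1:F) - 1)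
          - ((MonoidAlgebra.single (f a) (1:F) - 1)
              + ∑ γ ∈ s', (MonoidAlgebra.single (f γ) (1:F) - 1))
          = (MonoidAlgebra.single (f a) (1:F) - 1)
              * (MonoidAlgebra.single (∏ γ ∈ s', f γ) (1:F) - 1)
            + ((MonoidAlgebra.single (∏ γ ∈ s', f γ) (1:F) - 1)
              - ∑ γ ∈ s', (MonoidAlgebra.single (f γ) (1:F) - 1)) := by
        rw [hs]; ring
      rw [key]
      exact add_mem (Submodule.mul_mem_mul (gen_mem_augSub F Q (hf a))
        (gen_mem_augSub F Q (Subgroup.prod_mem Q (fun γ _ => hf γ)))) ih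
  -- key: σ x - n • 1 ∈ X ⊔ Y
  have sigma_mem : ∀ x : P,
      (∑ γ : ↥I, MonoidAlgebra.single ((γ : MulAut P) x) (1:F)) - (n : F) • 1 ∈ X ⊔ Y := by
    intro x
    obtain ⟨c, hc, q, hq, rfl⟩ := exists_decomp I p hP hI x
    have hterm : ∀ γ : ↥I, MonoidAlgebra.single ((γ : MulAut P) (c * q)) (1:F)
        = (MonoidAlgebra.single c (1:F) - 1) * MonoidAlgebra.single ((γ : MulAut P) q) (1:F)
          + MonoidAlgebra.single ((γ : MulAut P) q) (1:F) := by
      intro γ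
      have hgc : (γ : MulAut P) (c * q) = c * (γ : MulAut P) q := by
        rw [map_mul, hc (γ : MulAut P) γ.2]
      rw [hgc]
      have h12 : MonoidAlgebra.single (c * (γ : MulAut P) q) (1:F)
          = MonoidAlgebra.single c (1:F) * MonoidAlgebra.single ((γ : MulAut P) q) (1:F) := by
        rw [MonoidAlgebra.single_mul_single, one_mul]
      rw [h12]; ring
    have hsum : (∑ γ : ↥I, MonoidAlgebra.single ((γ : MulAut P) (c * q)) (1:F)) - (n : F) • 1
        = (MonoidAlgebra.single c (1:F) - 1)
            * (∑ γ : ↥I, MonoidAlgebra.single ((γ : MulAut P) q) (1:F))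
          + (∑ γ : ↥I, (MonoidAlgebra.single ((γ : MulAut P) q) (1:F) - 1)) := by
      rw [Finset.sum_congr rfl (fun γ _ => hterm γ), Finset.sum_add_distrib,
        Finset.mul_sum, Finset.sum_sub_distrib]
      have hone : (∑ _γ : ↥I, (1 : MonoidAlgebra F P)) = (n : F) • 1 := by
        rw [Finset.sum_const, Finset.card_univ, ← Nat.card_eq_fintype_card, ← hn,
          Nat.cast_smul_eq_nsmul]
      rw [hone]
      ring
    rw [hsum]
    apply Submodule.add_mem_sup
    · exact Submodule.mul_mem_mul (gen_mem_augSub F C hc) Submodule.mem_top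
    · -- second sum is in Y
      have hfq : ∀ γ : ↥I, (γ : MulAut P) q ∈ Q := fun γ => commSubgroup_invariant I γ.2 hq
      have hprod1 : (∏ γ : ↥I, (γ : MulAut P) q) = 1 := normMap_eq_one_of_mem I hq
      have hthis := prodL Finset.univ (fun γ : ↥I => (γ : MulAut P) q) hfq
      have heq : MonoidAlgebra.single (∏ γ : ↥I, (γ : MulAut P) q) (1:F) - 1
          - ∑ γ : ↥I, (MonoidAlgebra.single ((γ : MulAut P) q) (1:F) - 1)
          = -(∑ γ : ↥I, (MonoidAlgebra.single ((γ : MulAut P) q) (1:F) - 1)) := by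
        rw [hprod1, ← MonoidAlgebra.one_def]; ring
      rw [heq] at hthis
      have hneg := Submodule.neg_mem Y hthis
      rwa [neg_neg] at hneg
  -- averaging: radical elements of A land in X ⊔ Y
  set ε : MonoidAlgebra F P →ₐ[F] F := MonoidAlgebra.lift F F P 1 with hε
  have havg : ∀ z : ↥A, z ∈ jacRad F ↥A → (z : MonoidAlgebra F P) ∈ X ⊔ Y := by
    intro z hz
    set x : MonoidAlgebra F P := (z : MonoidAlgebra F P) with hx'
    have hfix : ∀ γ : ↥I, MonoidAlgebra.domCongr F F ((γ : MulAut P) : P ≃* P) x = x :=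
      fun γ => z.2 (γ : MulAut P) γ.2
    have haug : ε x = 0 := by
      set ε' : ↥A →ₐ[F] F := ε.comp (Subalgebra.val A) with hε'
      have hsurj : Function.Surjective ε'.toRingHom := by
        intro r
        refine ⟨algebraMap F ↥A r, ?_⟩
        simp [hε']
      have hmax : (RingHom.ker ε'.toRingHom).IsMaximal :=
        RingHom.ker_isMaximal_of_surjective _ hsurj
      have hle : Ideal.jacobson (⊥ : Ideal ↥A) ≤ RingHom.ker ε'.toRingHom :=
        sInf_le ⟨bot_le, hmax⟩
      have hker := hle hz
      simpa [RingHom.mem_ker, hε'] using hker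
    have hxsum : x = ∑ a ∈ x.coeff.support, MonoidAlgebra.single a (x.coeff a) := by
      conv_lhs => rw [← MonoidAlgebra.sum_coeff_single x]
      rfl
    have step1 : (n : F) • x = ∑ a ∈ x.coeff.support,
        x.coeff a • (∑ γ : ↥I, MonoidAlgebra.single ((γ : MulAut P) a) (1:F)) := by
      have h1 : (n : F) • x
          = ∑ γ : ↥I, MonoidAlgebra.domCongr F F ((γ : MulAut P) : P ≃* P) x := by
        rw [Finset.sum_congr rfl (fun γ _ => hfix γ), Finset.sum_const, Finset.card_univ,
          ← Nat.card_eq_fintype_card, ← hn, Nat.cast_smul_eq_nsmul]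
      have h2 : ∀ γ : ↥I, MonoidAlgebra.domCongr F F ((γ : MulAut P) : P ≃* P) x
          = ∑ a ∈ x.coeff.support, MonoidAlgebra.single ((γ : MulAut P) a) (x.coeff a) := by
        intro γ
        conv_lhs => rw [hxsum]
        rw [map_sum]
        exact Finset.sum_congr rfl fun a _ => by
          rw [MonoidAlgebra.domCongr_single]
      rw [h1, Finset.sum_congr rfl (fun γ _ => h2 γ), Finset.sum_comm]
      refine Finset.sum_congr rfl fun a _ => ?_
      rw [Finset.smul_sum]
      exact Finset.sum_congr rfl fun γ _ => by
        rw [MonoidAlgebra.smul_single', mul_one]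
    have step2 : (n : F) • x ∈ X ⊔ Y := by
      rw [step1]
      have hsplit : ∀ a ∈ x.coeff.support,
          x.coeff a • (∑ γ : ↥I, MonoidAlgebra.single ((γ : MulAut P) a) (1:F))
          = x.coeff a • ((∑ γ : ↥I, MonoidAlgebra.single ((γ : MulAut P) a) (1:F))
              - (n : F) • (1 : MonoidAlgebra F P))
            + x.coeff a • ((n : F) • (1 : MonoidAlgebra F P)) := by
        intro a _
        rw [← smul_add, sub_add_cancel]
      rw [Finset.sum_congr rfl hsplit, Finset.sum_add_distrib]
      have hz2 : ∑ a ∈ x.coeff.support, x.coeff a • ((n : F) • (1 : MonoidAlgebra F P)) = 0 := by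
        rw [← Finset.sum_smul]
        have hsum : ∑ a ∈ x.coeff.support, x.coeff a = ε x := by
          rw [hε, MonoidAlgebra.lift_apply]
          simp [Finsupp.sum]
        rw [hsum, haug, zero_smul]
      rw [hz2, add_zero]
      exact Submodule.sum_mem _ fun a _ => Submodule.smul_mem _ _ (sigma_mem a)
    have hxid : x = (n : F)⁻¹ • ((n : F) • x) := by
      rw [smul_smul, inv_mul_cancel₀ hnF, one_smul]
    rw [hxid]
    exact Submodule.smul_mem _ _ step2
  -- conclude
  have hmaple : Submodule.map (Subalgebra.val A).toLinearMap (jacRad F ↥A) ≤ X ⊔ Y := by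
    rintro _ ⟨z, hz, rfl⟩
    exact havg z hz
  have hCpos' : 0 < lC := hCpos
  have hQpos' : 0 < lQ := hQpos
  have htpos : 0 < t := by omega
  have htbot : jacRad F ↥A ^ t = ⊥ := by
    have h1 : Submodule.map (Subalgebra.val A).toLinearMap (jacRad F ↥A ^ t)
        = (Submodule.map (Subalgebra.val A).toLinearMap (jacRad F ↥A)) ^ t :=
      Submodule.map_pow _ _ _
    have h2 : (Submodule.map (Subalgebra.val A).toLinearMap (jacRad F ↥A)) ^ t ≤ (X ⊔ Y) ^ t :=
      submodule_pow_mono hmaple t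
    have h3 : (X ⊔ Y) ^ t = ⊥ := sup_pow_eq_bot hXbot hYbot (by omega)
    rw [eq_bot_iff]
    intro z hz
    have hmem : (Subalgebra.val A).toLinearMap z ∈ (⊥ : Submodule F (MonoidAlgebra F P)) := by
      rw [← h3]
      exact h2 (h1 ▸ Submodule.mem_map_of_mem hz)
    have hz0 : (z : MonoidAlgebra F P) = 0 := by simpa using hmem
    have : z = 0 := Subtype.ext hz0
    simp [this]
  have hLLle : LL F ↥A ≤ t := Nat.sInf_le ⟨htpos, htbot⟩
  have hfinal : t = lC + (lQ - 1) / 2 := by omega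
  calc LL F ↥A ≤ t := hLLle
    _ = lC + (lQ - 1) / 2 := hfinal
end

section
/- Let F be an algebraically closed field of characteristic p > 0 and P a non-abelian finite p-group. Then the Jacobson radical of the center of FP satisfies J(Z(FP)) ⊆ J(F[P'Z(P)]) · FP, where P'Z(P) is the (normal) subgroup generated by the derived subgroup P' and the center Z(P). Consequently LL(Z(FP)) ≤ LL(F[P'Z(P)]). -/
set_option synthInstance.maxHeartbeats 1000000
set_option maxHeartbeats 1000000

open MonoidAlgebra in
/-- In the group algebra of a finite `p`-group over a field of characteristic `p`,
the elements `g - 1` lie in the Jacobson radical. -/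
theorem aug_mem_jacobson (F : Type*) [Field F] (p : ℕ) [Fact p.Prime] [CharP F p]
    (G : Type*) [Group G] [Finite G] (hG : IsPGroup p G) (n : G) :
    (MonoidAlgebra.of F G n - 1) ∈ Ideal.jacobson (⊥ : Ideal (MonoidAlgebra F G)) := by
  set A := MonoidAlgebra F G with hA
  rw [Ideal.jacobson]
  refine Ideal.mem_sInf.2 ?_
  rintro m ⟨-, hm⟩
  haveI : IsSimpleModule A (A ⧸ m) := isSimpleModule_iff_isCoatom.2 (Ideal.isMaximal_def.1 hm)
  -- the fixed-point submodule
  have hsmulF : ∀ (r : F) (s : A ⧸ m) (g : G), (of F G g : A) • (r • s) = r • ((of F G g : A) • s) := by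
    intro r s g
    rw [← algebraMap_smul A r s, ← mul_smul, ← algebraMap_smul A r ((of F G g : A) • s),
      ← mul_smul, Algebra.commutes]
  let W : Submodule A (A ⧸ m) :=
    { carrier := {s | ∀ g : G, (of F G g : A) • s = s}
      add_mem' := by intro a b ha hb g; rw [smul_add, ha g, hb g]
      zero_mem' := by intro g; rw [smul_zero]
      smul_mem' := by
        intro c s hs
        induction c using MonoidAlgebra.induction_on with
        | of h =>
          intro g
          rw [← mul_smul, ← map_mul, hs (g * h), hs h]
        | add f₁ f₂ h1 h2 =>
          intro g; rw [add_smul, smul_add, h1 g, h2 g]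
        | smul r f hf =>
          intro g
          rw [smul_assoc, hsmulF, hf g] }
  -- a nonzero fixed vector exists
  have hex : ∃ s : A ⧸ m, s ≠ 0 ∧ ∀ g : G, (of F G g : A) • s = s := by
    classical
    set v : A ⧸ m := Submodule.Quotient.mk 1 with hv_def
    have hv : v ≠ 0 := by
      simp only [hv_def, ne_eq, Submodule.Quotient.mk_eq_zero]
      exact fun h => hm.ne_top ((Ideal.eq_top_iff_one m).2 h)
    letI : Module (ZMod p) (A ⧸ m) := Module.compHom _ (ZMod.castHom dvd_rfl F)
    have hzsmul : ∀ (c : ZMod p) (s : A ⧸ m), c • s = ((ZMod.castHom dvd_rfl F) c) • s :=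
      fun _ _ => rfl
    set orb : Set (A ⧸ m) := Set.range (fun g : G => (of F G g : A) • v) with horb
    set V : Submodule (ZMod p) (A ⧸ m) := Submodule.span (ZMod p) orb with hV
    haveI : Module.Finite (ZMod p) V := Module.Finite.span_of_finite _ (Set.finite_range _)
    haveI : Finite V := Module.finite_of_finite (ZMod p)
    have hstab : ∀ (g : G), ∀ w ∈ V, (of F G g : A) • w ∈ V := by
      intro g w hw
      induction hw using Submodule.span_induction with
      | mem x hx =>
        obtain ⟨h, rfl⟩ := hx
        exact Submodule.subset_span ⟨g * h, by simp only [map_mul, mul_smul]⟩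
      | zero => rw [smul_zero]; exact V.zero_mem
      | add x y _ _ hx hy => rw [smul_add]; exact V.add_mem hx hy
      | smul c x _ hx =>
        rw [hzsmul, hsmulF, ← hzsmul]; exact V.smul_mem c hx
    letI : SMul G V := ⟨fun g w => ⟨(of F G g : A) • w.1, hstab g _ w.2⟩⟩
    have hsmul_def : ∀ (g : G) (w : V),
        ((g • w : V) : A ⧸ m) = (of F G g : A) • (w : A ⧸ m) := fun _ _ => rfl
    letI : MulAction G V :=
      { one_smul := by
          intro w; apply Subtype.ext; rw [hsmul_def, map_one, one_smul]
        mul_smul := by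
          intro g h w; apply Subtype.ext
          rw [hsmul_def, hsmul_def, hsmul_def, map_mul, mul_smul] }
    haveI : NeZero p := ⟨(Fact.out : p.Prime).ne_zero⟩
    have hvV : v ∈ V := Submodule.subset_span ⟨1, by simp only [map_one, one_smul]⟩
    have hcard : ∃ d : ℕ, Nat.card V = p ^ d := by
      letI : Fintype V := Fintype.ofFinite _
      refine ⟨Module.finrank (ZMod p) V, ?_⟩
      rw [Nat.card_eq_fintype_card, Module.card_fintype (Module.finBasis (ZMod p) V), ZMod.card, Fintype.card_fin]
    obtain ⟨d, hd⟩ := hcard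
    haveI : Nontrivial V := ⟨⟨⟨v, hvV⟩, 0, by simp [Subtype.ext_iff, hv]⟩⟩
    have hdvd : p ∣ Nat.card V := by
      rcases Nat.eq_zero_or_pos d with rfl | hdpos
      · exfalso
        rw [pow_zero] at hd
        exact absurd hd (Finite.one_lt_card_iff_nontrivial.2 inferInstance).ne'
      · exact hd ▸ dvd_pow_self p hdpos.ne'
    have hmod := hG.card_modEq_card_fixedPoints V
    have hfixdvd : p ∣ Nat.card (MulAction.fixedPoints G V) := by
      have : Nat.card (MulAction.fixedPoints G V) ≡ 0 [MOD p] :=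
        hmod.symm.trans (Nat.modEq_zero_iff_dvd.2 hdvd)
      exact Nat.modEq_zero_iff_dvd.1 this
    have h0fix : (0 : V) ∈ MulAction.fixedPoints G V := by
      intro g; apply Subtype.ext; rw [hsmul_def]; exact smul_zero _
    haveI : Nonempty (MulAction.fixedPoints G V) := ⟨⟨0, h0fix⟩⟩
    have hpos : 0 < Nat.card (MulAction.fixedPoints G V) := Nat.card_pos
    have h2 : 1 < Nat.card (MulAction.fixedPoints G V) :=
      lt_of_lt_of_le (Fact.out : p.Prime).one_lt (Nat.le_of_dvd hpos hfixdvd)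
    haveI : Nontrivial (MulAction.fixedPoints G V) := Finite.one_lt_card_iff_nontrivial.1 h2
    obtain ⟨w, hw⟩ := exists_ne (⟨(0 : V), h0fix⟩ : MulAction.fixedPoints G V)
    refine ⟨((w : V) : A ⧸ m), ?_, ?_⟩
    · intro h
      apply hw
      apply Subtype.ext; apply Subtype.ext
      exact h
    · intro g
      have := w.2 g
      have h3 := congrArg (Subtype.val) this
      rw [hsmul_def] at h3
      exact h3
  obtain ⟨s, hs0, hsfix⟩ := hex
  have hW : W = ⊤ := by
    rcases eq_bot_or_eq_top W with h | h
    · exact absurd (h ▸ (show s ∈ W from hsfix)) (by simpa using hs0)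
    · exact h
  have h1 : (Submodule.Quotient.mk 1 : A ⧸ m) ∈ W := hW ▸ Submodule.mem_top
  have := h1 n
  rw [← Submodule.Quotient.mk_smul, smul_eq_mul, mul_one] at this
  have h2 : (Submodule.Quotient.mk (of F G n) : A ⧸ m) = Submodule.Quotient.mk 1 := this
  rw [Submodule.Quotient.eq] at h2
  exact h2

theorem nak {A : Type*} [Ring A] (I : Ideal A)
    (htwo : ∀ a ∈ I, ∀ b : A, a * b ∈ I)
    (hunit : ∀ a ∈ I, ∃ s : A, s * (1 - a) = 1) :
    ∀ s : Finset A, Submodule.span A (s : Set A) ≤ I • Submodule.span A (s : Set A) →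
      Submodule.span A (s : Set A) = ⊥ := by
  intro s
  classical
  induction s using Finset.induction_on with
  | empty => intro _; simp
  | @insert x t hx ih =>
    intro h
    have hxmem : x ∈ I • Submodule.span A (insert x (t : Set A)) := by
      rw [← Finset.coe_insert]
      exact h (Submodule.subset_span (by simp))
    rw [Submodule.span_insert, Submodule.smul_sup] at hxmem
    obtain ⟨y, hy, z, hz, hyz⟩ := Submodule.mem_sup.1 hxmem
    have hya : ∃ a ∈ I, y = a * x := by
      refine Submodule.smul_induction_on hy ?_ ?_
      · intro r hr n hn
        obtain ⟨b, rfl⟩ := Submodule.mem_span_singleton.1 hn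
        exact ⟨r * b, htwo r hr b, by rw [smul_eq_mul, smul_eq_mul, mul_assoc]⟩
      · rintro u v ⟨a, ha, rfl⟩ ⟨b, hb, rfl⟩
        exact ⟨a + b, I.add_mem ha hb, (add_mul a b x).symm⟩
    obtain ⟨a, haI, hy_eq⟩ := hya
    obtain ⟨sa, hsa⟩ := hunit a haI
    have hz' : z = x - y := by rw [← hyz]; abel
    have hz_eq : (1 - a) * x = z := by
      rw [sub_mul, one_mul, hz', hy_eq]
    have hxt : x ∈ I • Submodule.span A (t : Set A) := by
      have hx_eq : x = sa • z := by
        rw [smul_eq_mul, ← hz_eq, ← mul_assoc, hsa, one_mul]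
      rw [hx_eq]
      exact Submodule.smul_mem _ sa hz
    have hxsp : x ∈ Submodule.span A (t : Set A) := Submodule.smul_le_right hxt
    have hspan : Submodule.span A (insert x (t : Set A)) = Submodule.span A (t : Set A) := by
      rw [Submodule.span_insert]
      refine le_antisymm (sup_le ?_ le_rfl) le_sup_right
      rw [Submodule.span_le, Set.singleton_subset_iff]
      exact hxsp
    rw [Finset.coe_insert, hspan] at h ⊢
    exact ih h

theorem pow_stab_bot {F A : Type*} [Field F] [Ring A] [Algebra F A] [FiniteDimensional F A]
    [Nontrivial A] (I : Ideal A)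
    (htwo : ∀ a ∈ I, ∀ b : A, a * b ∈ I)
    (hunit : ∀ a ∈ I, ∃ s : A, s * (1 - a) = 1) :
    ∃ k : ℕ, 0 < k ∧ I ^ k = ⊥ := by
  have hps : ∀ k : ℕ, I ^ (k + 1) = I ^ k * I := fun _ => rfl
  have hp0 : I ^ 0 = ⊤ := Ideal.one_eq_top
  have habs : ∀ k : ℕ, ∀ x ∈ I ^ k, ∀ b : A, x * b ∈ I ^ k := by
    intro k
    induction k with
    | zero => intro x _ b; rw [hp0]; exact Submodule.mem_top
    | succ k ih =>
      intro x hx b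
      rw [hps] at hx ⊢
      refine Submodule.smul_induction_on hx ?_ ?_
      · intro r hr s hs
        rw [smul_eq_mul, mul_assoc]
        exact Ideal.mul_mem_mul hr (htwo s hs b)
      · intro u v hu hv
        rw [add_mul]
        exact Submodule.add_mem _ hu hv
  have hcomm : ∀ k : ℕ, I * I ^ k = I ^ (k + 1) := by
    intro k
    induction k with
    | zero =>
      rw [hps, hp0, Ideal.top_mul]
      refine le_antisymm (Ideal.mul_le.2 fun r hr s _ => htwo r hr s) fun x hx => ?_
      have hxx := Ideal.mul_mem_mul hx (Submodule.mem_top (x := (1 : A)))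
      rwa [mul_one] at hxx
    | succ k ih =>
      rw [hps, ← Ideal.mul_assoc, ih, ← hps]
  have hanti : ∀ k : ℕ, I ^ (k + 1) ≤ I ^ k := by
    intro k
    rw [hps]
    exact Ideal.mul_le.2 fun r hr s hs => habs k r hr s
  set f : ℕ → ℕ := fun k => Module.finrank F (Submodule.restrictScalars F (I ^ k)) with hf
  obtain ⟨k, hk⟩ : ∃ k, f k = sInf (Set.range f) := Nat.sInf_mem (Set.range_nonempty f)
  have hstab : I ^ (k + 1) = I ^ k := by
    have hle : Submodule.restrictScalars F (I ^ (k + 1)) ≤ Submodule.restrictScalars F (I ^ k) :=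
      hanti k
    have hrk : f k ≤ f (k + 1) := hk ▸ Nat.sInf_le ⟨k + 1, rfl⟩
    exact Submodule.restrictScalars_injective F A A
      (Submodule.eq_of_le_of_finrank_le hle hrk)
  haveI : IsNoetherian A A := isNoetherian_of_tower F inferInstance
  obtain ⟨s, hs⟩ := IsNoetherian.noetherian (I ^ k)
  have hbot : I ^ k = ⊥ := by
    rw [← hs]
    refine nak I htwo hunit s ?_
    rw [hs, Ideal.smul_eq_mul, hcomm, hstab]
  refine ⟨k, ?_, hbot⟩
  rcases Nat.eq_zero_or_pos k with rfl | hpos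
  · exfalso
    rw [hp0] at hbot
    exact top_ne_bot hbot
  · exact hpos

theorem restrict_pow_le {F A : Type*} [CommSemiring F] [Ring A] [Algebra F A] (I : Ideal A) :
    ∀ k : ℕ, (Submodule.restrictScalars F I) ^ k ≤ Submodule.restrictScalars F (I ^ k) := by
  intro k
  induction k with
  | zero =>
    have h2 : I ^ 0 = ⊤ := Ideal.one_eq_top
    rw [pow_zero, h2]
    simp
  | succ k ih =>
    have h1 : (Submodule.restrictScalars F I) ^ (k + 1) =
        (Submodule.restrictScalars F I) ^ k * Submodule.restrictScalars F I := pow_succ _ _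
    have h2 : I ^ (k + 1) = I ^ k * I := rfl
    rw [h1, h2]
    refine Submodule.mul_le.2 fun x hx y hy => ?_
    exact Ideal.mul_mem_mul (ih hx) hy

noncomputable def aug (F : Type*) [Field F] (G : Type*) [Group G] :
    MonoidAlgebra F G →ₐ[F] F := MonoidAlgebra.lift F F G 1

theorem aug_apply_s8 {F : Type*} [Field F] {G : Type*} [Group G] [Fintype G]
    (x : MonoidAlgebra F G) : aug F G x = ∑ g : G, x.coeff g := by
  rw [aug, MonoidAlgebra.lift_apply]
  rw [Finsupp.sum_fintype]
  · simp
  · intro i; simp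

theorem aug_surjective (F : Type*) [Field F] (G : Type*) [Group G] :
    Function.Surjective (aug F G) :=
  fun c => ⟨c • 1, by rw [map_smul, map_one, smul_eq_mul, mul_one]⟩

theorem jacobson_le_ker_aug (F : Type*) [Field F] (G : Type*) [Group G] :
    Ideal.jacobson (⊥ : Ideal (MonoidAlgebra F G)) ≤ RingHom.ker (aug F G) := by
  have hmax : (RingHom.ker (aug F G)).IsMaximal :=
    RingHom.ker_isMaximal_of_surjective _ (aug_surjective F G)
  exact sInf_le ⟨bot_le, hmax⟩

theorem ker_aug_le_jacobson (F : Type*) [Field F] (p : ℕ) [Fact p.Prime] [CharP F p]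
    (G : Type*) [Group G] [Fintype G] (hG : IsPGroup p G) :
    RingHom.ker (aug F G) ≤ Ideal.jacobson (⊥ : Ideal (MonoidAlgebra F G)) := by
  intro x hx
  have hx0 : aug F G x = 0 := hx
  have hsum0 : ∑ g ∈ x.coeff.support, x.coeff g = 0 := by
    rw [aug_apply_s8] at hx0
    rw [← hx0]
    exact Finset.sum_subset (Finset.subset_univ _)
      (fun g _ hg => Finsupp.notMem_support_iff.1 hg)
  have hx1 : ∑ g ∈ x.coeff.support, MonoidAlgebra.single g (x.coeff g) = x := MonoidAlgebra.sum_coeff_single x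
  have h2 : ∀ g : G, (x.coeff g) • (MonoidAlgebra.of F G g - 1)
      = MonoidAlgebra.single g (x.coeff g) - (x.coeff g) • 1 := by
    intro g
    rw [smul_sub]
    congr 1
    rw [MonoidAlgebra.of_apply, MonoidAlgebra.smul_single', mul_one]
  have hrepr : x = ∑ g ∈ x.coeff.support, (x.coeff g) • (MonoidAlgebra.of F G g - 1) := by
    rw [Finset.sum_congr rfl (fun g _ => h2 g), Finset.sum_sub_distrib, hx1,
      ← Finset.sum_smul, hsum0, zero_smul, sub_zero]
  rw [hrepr]
  refine Submodule.sum_mem _ fun g _ => ?_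
  rw [Algebra.smul_def]
  exact Ideal.mul_mem_left _ _ (aug_mem_jacobson F p G hG g)

theorem pow_mono_submodule {F A : Type*} [CommSemiring F] [Semiring A] [Algebra F A]
    {M N : Submodule F A} (h : M ≤ N) : ∀ k : ℕ, M ^ k ≤ N ^ k := by
  intro k
  induction k with
  | zero => simp
  | succ k ih =>
    rw [pow_succ, pow_succ]
    exact Submodule.mul_le.2 fun a ha b hb => Submodule.mul_mem_mul (ih ha) (h hb)

theorem jacRad_pow_bot (F : Type*) [Field F] (p : ℕ) [Fact p.Prime] [CharP F p]
    (G : Type*) [Group G] [Fintype G] (hG : IsPGroup p G) :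
    ∃ l : ℕ, 0 < l ∧ jacRad F (MonoidAlgebra F G) ^ l = ⊥ := by
  classical
  set A := MonoidAlgebra F G with hA
  set I : Ideal A := RingHom.ker (aug F G) with hI
  have htwo : ∀ a ∈ I, ∀ b : A, a * b ∈ I := by
    intro a ha b
    have ha' : aug F G a = 0 := ha
    show aug F G (a * b) = 0
    rw [map_mul, ha', zero_mul]
  have hIle : I ≤ Ideal.jacobson (⊥ : Ideal A) := ker_aug_le_jacobson F p G hG
  have hunit : ∀ a ∈ I, ∃ s : A, s * (1 - a) = 1 := by
    intro a ha
    obtain ⟨s, hs⟩ := Ideal.exists_mul_add_sub_mem_of_mem_jacobson (-a)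
      ((Ideal.jacobson (⊥ : Ideal A)).neg_mem (hIle ha))
    refine ⟨s, ?_⟩
    rw [Submodule.mem_bot, sub_eq_zero] at hs
    rw [neg_add_eq_sub] at hs
    exact hs
  haveI : FiniteDimensional F A := Module.Finite.equiv ((MonoidAlgebra.coeffLinearEquiv F).trans (Finsupp.linearEquivFunOnFinite F F G)).symm
  obtain ⟨k, hk0, hkbot⟩ := pow_stab_bot (F := F) I htwo hunit
  refine ⟨k, hk0, ?_⟩
  have h1 : jacRad F A ≤ Submodule.restrictScalars F I := fun a ha =>
    jacobson_le_ker_aug F G ha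
  have h2 : jacRad F A ^ k ≤ Submodule.restrictScalars F (I ^ k) :=
    (pow_mono_submodule h1 k).trans (restrict_pow_le I k)
  rw [hkbot] at h2
  exact le_bot_iff.1 h2

/-- For an algebraically closed field `F` of characteristic `p > 0` and a non-abelian finite
`p`-group `P`, with `N := P'Z(P)`, one has `J(Z(FP)) ⊆ J(FN)·FP`; consequently
`LL(Z(FP)) ≤ LL(FN)`. -/
theorem jacobson_center_le_radical_of_derived_center (F : Type*) [Field F] [IsAlgClosed F]
    (p : ℕ) [Fact p.Prime] [CharP F p]
    (P : Type*) [Group P] [Fintype P] (hP : IsPGroup p P)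
    (hnab : ¬ (∀ x y : P, x * y = y * x))
    (N : Subgroup P) (hN : N = commutator P ⊔ Subgroup.center P) :
    Submodule.map (Subalgebra.center F (MonoidAlgebra F P)).val.toLinearMap
        (jacRad F (Subalgebra.center F (MonoidAlgebra F P))) ≤
      Submodule.map (MonoidAlgebra.mapDomainAlgHom F F N.subtype).toLinearMap
          (jacRad F (MonoidAlgebra F N)) * (⊤ : Submodule F (MonoidAlgebra F P)) ∧
    LL F (Subalgebra.center F (MonoidAlgebra F P)) ≤ LL F (MonoidAlgebra F N) := by
  classical
  have hNnormal : N.Normal := by rw [hN]; exact Subgroup.sup_normal _ _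
  set Z := Subalgebra.center F (MonoidAlgebra F P) with hZdef
  set φ := MonoidAlgebra.mapDomainAlgHom F F N.subtype with hφdef
  set J0 : Submodule F (MonoidAlgebra F P) := Submodule.span F
    (Set.range fun n : ↥N => MonoidAlgebra.single ((n : P)) (1 : F) - 1) with hJ0def
  have hgenmem : ∀ n : ↥N, MonoidAlgebra.single ((n : P)) (1 : F) - 1 ∈ J0 := fun n =>
    Submodule.subset_span ⟨n, rfl⟩
  have hgen : ∀ n : P, n ∈ N → ∀ (g : P) (c : F),
      MonoidAlgebra.single (n * g) c - MonoidAlgebra.single g c ∈ J0 * ⊤ := by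
    intro n hn g c
    have h1 : MonoidAlgebra.single (n * g) c - MonoidAlgebra.single g c
        = (MonoidAlgebra.single n (1 : F) - 1) * MonoidAlgebra.single g c := by
      rw [sub_mul, MonoidAlgebra.single_mul_single, one_mul, one_mul]
    rw [h1]
    exact Submodule.mul_mem_mul (hgenmem ⟨n, hn⟩) Submodule.mem_top
  have hJ0le : J0 ≤ Submodule.map φ.toLinearMap (jacRad F (MonoidAlgebra F ↥N)) := by
    rw [hJ0def, Submodule.span_le]
    rintro _ ⟨n, rfl⟩
    refine ⟨MonoidAlgebra.of F ↥N n - 1, aug_mem_jacobson F p ↥N (hP.to_subgroup N) n, ?_⟩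
    have : φ (MonoidAlgebra.of F ↥N n - 1)
        = MonoidAlgebra.single ((n : P)) (1 : F) - 1 := by
      rw [map_sub, map_one]
      congr 1
      rw [hφdef]
      simp [MonoidAlgebra.mapDomainAlgHom, MonoidAlgebra.of_apply, Finsupp.mapDomain_single]
    exact this
  -- moving group elements past J0
  have hof : ∀ g : P, ∀ b ∈ J0, MonoidAlgebra.single g (1 : F) * b ∈ J0 * ⊤ := by
    intro g b hb
    induction hb using Submodule.span_induction with
    | mem y hy =>
      obtain ⟨n, rfl⟩ := hy
      have hn' : g * (n : P) * g⁻¹ ∈ N := hNnormal.conj_mem _ n.2 g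
      have heq : MonoidAlgebra.single g (1 : F) * (MonoidAlgebra.single ((n : P)) 1 - 1)
          = MonoidAlgebra.single (g * (n : P) * g⁻¹ * g) (1 : F)
            - MonoidAlgebra.single g 1 := by
        rw [mul_sub, mul_one, MonoidAlgebra.single_mul_single, one_mul]
        congr 2
        group
      rw [heq]
      exact hgen _ hn' g 1
    | zero => rw [mul_zero]; exact Submodule.zero_mem _
    | add u v _ _ hu hv => rw [mul_add]; exact Submodule.add_mem _ hu hv
    | smul r u _ hu => rw [mul_smul_comm]; exact Submodule.smul_mem _ r hu
  have hswap : ∀ a : MonoidAlgebra F P, ∀ b ∈ J0, a * b ∈ J0 * ⊤ := by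
    intro a b hb
    induction a using MonoidAlgebra.induction_on with
    | of g => exact hof g b hb
    | add u v hu hv => rw [add_mul]; exact Submodule.add_mem _ hu hv
    | smul r u hu => rw [smul_mul_assoc]; exact Submodule.smul_mem _ r hu
  have hmulswap : (⊤ : Submodule F (MonoidAlgebra F P)) * J0 ≤ J0 * ⊤ :=
    Submodule.mul_le.2 fun a _ b hb => hswap a b hb
  have hpow : ∀ l : ℕ, (J0 * ⊤) ^ (l + 1) ≤ J0 ^ (l + 1) * ⊤ := by
    intro l
    induction l with
    | zero => rw [pow_one, pow_one]
    | succ l ih =>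
      calc (J0 * ⊤) ^ (l + 2) = (J0 * ⊤) ^ (l + 1) * (J0 * ⊤) := pow_succ _ _
        _ ≤ (J0 ^ (l + 1) * ⊤) * (J0 * ⊤) := mul_le_mul' ih le_rfl
        _ = J0 ^ (l + 1) * (⊤ * J0) * ⊤ := by rw [mul_assoc, mul_assoc, mul_assoc]
        _ ≤ J0 ^ (l + 1) * (J0 * ⊤) * ⊤ :=
          mul_le_mul' (mul_le_mul' le_rfl hmulswap) le_rfl
        _ = (J0 ^ (l + 1) * J0) * (⊤ * ⊤) := by rw [mul_assoc, mul_assoc, mul_assoc]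
        _ ≤ J0 ^ (l + 2) * ⊤ := by
            rw [← pow_succ]
            exact mul_le_mul' le_rfl le_top
  -- conjugation-invariance of central coefficients
  have hcenter_coeff : ∀ x : MonoidAlgebra F P, x ∈ Z → ∀ h g : P, x.coeff (h * g * h⁻¹) = x.coeff g := by
    intro x hx h g
    have hcomm := (Subalgebra.mem_center_iff.1 hx) (MonoidAlgebra.single h 1)
    have h2 : (MonoidAlgebra.single h (1 : F) * x).coeff (h * g) = x.coeff g := by
      rw [MonoidAlgebra.coeff_single_mul_apply, one_mul, inv_mul_cancel_left]
    have h3 : (x * MonoidAlgebra.single h (1 : F)).coeff (h * g) = x.coeff (h * g * h⁻¹) := by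
      rw [MonoidAlgebra.coeff_mul_single_apply, mul_one]
    rw [← h3, ← hcomm, h2]
  -- the representative function
  set rep : P → P := fun g => (ConjClasses.mk g).out with hrepdef
  have hmk_rep : ∀ g : P, ConjClasses.mk (rep g) = ConjClasses.mk g := fun g =>
    Quotient.out_eq _
  have hrep_idem : ∀ g : P, rep (rep g) = rep g := fun g =>
    congrArg Quotient.out (hmk_rep g)
  have hisconj : ∀ g : P, IsConj (rep g) g := fun g =>
    ConjClasses.mk_eq_mk_iff_isConj.1 (hmk_rep g)
  -- divisibility of class sizes of non-central elements
  have hcardF : ∀ r : P, r ∉ Subgroup.center P → rep r = r →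
      (((Finset.univ.filter fun g : P => rep g = r).card : F) = 0) := by
    intro r hrc hrr
    have hfe : (Finset.univ.filter fun g : P => rep g = r)
        = Finset.univ.filter fun g : P => ConjClasses.mk g = ConjClasses.mk r := by
      ext g
      simp only [Finset.mem_filter, Finset.mem_univ, true_and]
      constructor
      · intro h
        exact (hmk_rep g).symm.trans (congrArg ConjClasses.mk h)
      · intro h
        have : rep g = rep r := congrArg Quotient.out h
        rw [this, hrr]
    letI : Fintype (ConjAct P) := Fintype.ofFinite _
    letI : Fintype (MulAction.orbit (ConjAct P) r) := Fintype.ofFinite _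
    letI : Fintype (MulAction.stabilizer (ConjAct P) r) := Fintype.ofFinite _
    have horb := MulAction.card_orbit_mul_card_stabilizer_eq_card_group (ConjAct P) r
    have hdvd : Fintype.card (MulAction.orbit (ConjAct P) r) ∣ Fintype.card (ConjAct P) :=
      ⟨_, horb.symm⟩
    obtain ⟨n0, hn0⟩ := IsPGroup.iff_card.1 hP
    have hcardP : Fintype.card (ConjAct P) = p ^ n0 := by
      rw [← Nat.card_eq_fintype_card]
      exact (Nat.card_congr (ConjAct.toConjAct (G := P)).symm.toEquiv).trans hn0
    rw [hcardP] at hdvd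
    obtain ⟨m, hmle, hm⟩ := (Nat.dvd_prime_pow (Fact.out : p.Prime)).1 hdvd
    have hm0 : m ≠ 0 := by
      intro h0
      rw [h0, pow_zero] at hm
      haveI hsub : Subsingleton (MulAction.orbit (ConjAct P) r) := by
        rw [← Fintype.card_le_one_iff_subsingleton, hm]
      obtain ⟨c, hc⟩ : ∃ c : P, ¬ (c * r = r * c) := by
        by_contra hcon
        push_neg at hcon
        exact hrc (Subgroup.mem_center_iff.2 hcon)
      have heq := Subsingleton.elim
        (⟨r, MulAction.mem_orbit_self r⟩ : MulAction.orbit (ConjAct P) r)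
        (⟨ConjAct.toConjAct c • r, MulAction.mem_orbit r _⟩)
      have heq2 : r = ConjAct.toConjAct c • r := congrArg Subtype.val heq
      rw [ConjAct.smul_def, ConjAct.ofConjAct_toConjAct] at heq2
      exact hc (mul_inv_eq_iff_eq_mul.1 heq2.symm)
    have hpdvd : p ∣ Fintype.card (MulAction.orbit (ConjAct P) r) := by
      rw [hm]
      exact dvd_pow_self p hm0
    have hcards : (Finset.univ.filter fun g : P => rep g = r).card
        = Fintype.card (MulAction.orbit (ConjAct P) r) := by
      rw [hfe]
      have hset : MulAction.orbit (ConjAct P) r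
          = {g : P | ConjClasses.mk g = ConjClasses.mk r} := by
        rw [ConjAct.orbit_eq_carrier_conjClasses]
        ext g
        exact ConjClasses.mem_carrier_iff_mk_eq
      rw [← Fintype.card_subtype]
      exact (Fintype.card_congr (Equiv.setCongr hset)).symm
    rw [hcards]
    exact (CharP.cast_eq_zero_iff F p _).2 hpdvd
  -- the core inclusion
  have hcore : ∀ x : MonoidAlgebra F P, x ∈ Z → aug F P x = 0 → x ∈ J0 * ⊤ := by
    intro x hx haug
    have hxrep : ∀ g : P, x.coeff (rep g) = x.coeff g := by
      intro g
      obtain ⟨c, hc⟩ := isConj_iff.1 (hisconj g)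
      have := hcenter_coeff x hx c (rep g)
      rw [hc] at this
      exact this.symm ▸ rfl
    have hx1 : x = ∑ g : P, MonoidAlgebra.single g (x.coeff g) := by
      have h1 : ∑ g ∈ x.coeff.support, MonoidAlgebra.single g (x.coeff g)
          = ∑ g : P, MonoidAlgebra.single g (x.coeff g) :=
        Finset.sum_subset (Finset.subset_univ _)
          (fun g _ hg => by rw [Finsupp.notMem_support_iff.1 hg]; simp)
      rw [← h1]
      exact (MonoidAlgebra.sum_coeff_single x).symm
    have hstep1 : x - (∑ g : P, MonoidAlgebra.single (rep g) (x.coeff g)) ∈ J0 * ⊤ := by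
      have hdiff : x - (∑ g : P, MonoidAlgebra.single (rep g) (x.coeff g))
          = ∑ g : P, (MonoidAlgebra.single g (x.coeff g) - MonoidAlgebra.single (rep g) (x.coeff g)) := by
        rw [Finset.sum_sub_distrib, ← hx1]
      rw [hdiff]
      refine Submodule.sum_mem _ fun g _ => ?_
      obtain ⟨c, hc⟩ := isConj_iff.1 (hisconj g)
      have hnmem : g * (rep g)⁻¹ ∈ N := by
        open scoped commutatorElement in
        have hcom : ⁅c, rep g⁆ = g * (rep g)⁻¹ := by
          rw [commutatorElement_def, hc]
        rw [hN, ← hcom]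
        exact Subgroup.mem_sup_left
          (Subgroup.commutator_mem_commutator (Subgroup.mem_top c) (Subgroup.mem_top (rep g)))
      have hgr : (g * (rep g)⁻¹) * rep g = g := inv_mul_cancel_right g (rep g)
      have := hgen _ hnmem (rep g) (x.coeff g)
      rwa [hgr] at this
    set f : P → MonoidAlgebra F P := fun r => MonoidAlgebra.single r (x.coeff r) with hfdef
    have hy : (∑ g : P, MonoidAlgebra.single (rep g) (x.coeff g)) = ∑ g : P, f (rep g) := by
      refine Finset.sum_congr rfl fun g _ => ?_
      rw [hfdef]
      simp only []
      rw [hxrep g]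
    have hcomp : ∑ g : P, f (rep g) = ∑ r ∈ Finset.univ.image rep,
        (Finset.univ.filter fun g : P => rep g = r).card • f r := Finset.sum_comp f rep
    have hstep2 : (∑ g : P, f (rep g))
        - (∑ r ∈ Finset.univ.image rep,
            ((Finset.univ.filter fun g : P => rep g = r).card : F)
              • MonoidAlgebra.single (1 : P) (x.coeff r)) ∈ J0 * ⊤ := by
      rw [hcomp, ← Finset.sum_sub_distrib]
      refine Submodule.sum_mem _ fun r hr => ?_
      have hrr : rep r = r := by
        obtain ⟨g, -, hg⟩ := Finset.mem_image.1 hr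
        rw [← hg, hrep_idem]
      rw [← Nat.cast_smul_eq_nsmul F]
      by_cases hc : r ∈ Subgroup.center P
      · have hmem1 : f r - MonoidAlgebra.single (1 : P) (x.coeff r) ∈ J0 * ⊤ := by
          have hrN : r ∈ N := by
            rw [hN]
            exact Subgroup.mem_sup_right hc
          have := hgen r hrN 1 (x.coeff r)
          rwa [mul_one] at this
        rw [← smul_sub]
        exact Submodule.smul_mem _ _ hmem1
      · rw [hcardF r hc hrr, zero_smul, zero_smul, sub_zero]
        exact Submodule.zero_mem _
    have hstep3 : (∑ r ∈ Finset.univ.image rep,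
        ((Finset.univ.filter fun g : P => rep g = r).card : F)
          • MonoidAlgebra.single (1 : P) (x.coeff r)) = 0 := by
      have h1 : ∀ r : P, ((Finset.univ.filter fun g : P => rep g = r).card : F)
          • MonoidAlgebra.single (1 : P) (x.coeff r)
          = MonoidAlgebra.single (1 : P)
              (((Finset.univ.filter fun g : P => rep g = r).card : F) * x.coeff r) :=
        fun r => MonoidAlgebra.smul_single' _ _ _
      rw [Finset.sum_congr rfl fun r _ => h1 r]
      simp only [← MonoidAlgebra.ofCoeff_single, ← MonoidAlgebra.ofCoeff_sum, ← Finsupp.single_finset_sum]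
      have h2 : ∑ r ∈ Finset.univ.image rep,
          ((Finset.univ.filter fun g : P => rep g = r).card : F) * x.coeff r = 0 := by
        have h3 : ∀ r ∈ Finset.univ.image rep,
            ((Finset.univ.filter fun g : P => rep g = r).card : F) * x.coeff r
            = ∑ g ∈ Finset.univ.filter fun g : P => rep g = r, x.coeff g := by
          intro r hr
          rw [Finset.sum_congr rfl fun g hg => ?_, Finset.sum_const, nsmul_eq_mul]
          rw [← (Finset.mem_filter.1 hg).2, hxrep]
        rw [Finset.sum_congr rfl h3,
          Finset.sum_fiberwise_of_maps_to (fun g _ => Finset.mem_image_of_mem rep (Finset.mem_univ g)) x.coeff]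
        rw [aug_apply_s8] at haug
        exact haug
      rw [h2, Finsupp.single_zero, MonoidAlgebra.ofCoeff_zero]
    have hfinal : x = (x - (∑ g : P, MonoidAlgebra.single (rep g) (x.coeff g)))
        + ((∑ g : P, f (rep g))
          - (∑ r ∈ Finset.univ.image rep,
              ((Finset.univ.filter fun g : P => rep g = r).card : F)
                • MonoidAlgebra.single (1 : P) (x.coeff r)))
        + (∑ r ∈ Finset.univ.image rep,
            ((Finset.univ.filter fun g : P => rep g = r).card : F)
              • MonoidAlgebra.single (1 : P) (x.coeff r)) := by
      rw [← hy]
      abel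
    rw [hfinal]
    exact Submodule.add_mem _ (Submodule.add_mem _ hstep1 hstep2) (hstep3 ▸ Submodule.zero_mem _)
  -- the projection inclusion
  have hproj : Submodule.map Z.val.toLinearMap (jacRad F Z) ≤ J0 * ⊤ := by
    rintro _ ⟨z, hz, rfl⟩
    refine hcore z.1 z.2 ?_
    set φa : Z →ₐ[F] F := (aug F P).comp Z.val with hφa
    have hsurj : Function.Surjective φa := fun c =>
      ⟨algebraMap F Z c, by
        rw [AlgHom.comp_apply, AlgHom.commutes, AlgHom.commutes]
        rfl⟩
    have hmax : (RingHom.ker φa.toRingHom).IsMaximal :=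
      RingHom.ker_isMaximal_of_surjective _ hsurj
    have hk : z ∈ RingHom.ker φa.toRingHom :=
      (sInf_le ⟨bot_le, hmax⟩ : Ideal.jacobson ⊥ ≤ RingHom.ker φa.toRingHom) hz
    exact hk
  -- part 2 setup
  haveI : Fintype ↥N := Fintype.ofFinite _
  obtain ⟨k, hk0, hkbot⟩ := jacRad_pow_bot F p ↥N (hP.to_subgroup N)
  have hmem : LL F (MonoidAlgebra F ↥N) ∈
      {l : ℕ | 0 < l ∧ jacRad F (MonoidAlgebra F ↥N) ^ l = ⊥} :=
    Nat.sInf_mem ⟨k, hk0, hkbot⟩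
  obtain ⟨hl0, hlbot⟩ := hmem
  constructor
  · exact hproj.trans (mul_le_mul' hJ0le le_rfl)
  · refine Nat.sInf_le ⟨hl0, ?_⟩
    set l := LL F (MonoidAlgebra F ↥N) with hldef
    have hinj : Function.Injective Z.val.toLinearMap := Subtype.val_injective
    have h1 : Submodule.map Z.val.toLinearMap (jacRad F Z ^ l)
        = (Submodule.map Z.val.toLinearMap (jacRad F Z)) ^ l :=
      Submodule.map_pow _ _ l
    obtain ⟨l', hl'⟩ : ∃ l', l = l' + 1 := ⟨l - 1, (Nat.succ_pred_eq_of_pos hl0).symm⟩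
    have h2 : (Submodule.map Z.val.toLinearMap (jacRad F Z)) ^ l ≤ J0 ^ l * ⊤ := by
      calc (Submodule.map Z.val.toLinearMap (jacRad F Z)) ^ l ≤ (J0 * ⊤) ^ l :=
            pow_mono_submodule hproj l
        _ ≤ J0 ^ l * ⊤ := by rw [hl']; exact hpow l'
    have h3 : J0 ^ l ≤ ⊥ := by
      calc J0 ^ l ≤ (Submodule.map φ.toLinearMap (jacRad F (MonoidAlgebra F ↥N))) ^ l :=
            pow_mono_submodule hJ0le l
        _ = Submodule.map φ.toLinearMap (jacRad F (MonoidAlgebra F ↥N) ^ l) :=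
            (Submodule.map_pow _ _ l).symm
        _ = ⊥ := by rw [hlbot, Submodule.map_bot]
    have h4 : Submodule.map Z.val.toLinearMap (jacRad F Z ^ l) = ⊥ := by
      refine le_bot_iff.1 ?_
      rw [h1]
      refine h2.trans (le_trans (mul_le_mul' h3 le_rfl) ?_)
      rw [Submodule.bot_mul]
    exact Submodule.map_injective_of_injective hinj (by rw [h4, Submodule.map_bot])
end
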